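/- Let 0<γ<1, a≥0 real, and let 0=t₀<t₁<⋯<t_n with τ_j = t_{j+1}−t_j. Let v be twice continuously differentiable on [0,t_n], set w(s)=e^{a s}v(s), and for each j let T_j be the affine function on [t_j,t_{j+1}] with T_j(t_j)=w(t_j) and T_j(t_{j+1})=w(t_{j+1}). Define the product-integration remainder R^n = (ˢD_{*,t}^γ v)(t_n) − (e^{−a t_n}/Γ(1−γ)) Σ_{j=0}^{n−1} ∫_{t_j}^{t_{j+1}} (t_n−s)^{−γ} T_j'(s) ds. Then, with C = max_{0≤t≤t_n} | e^{a(t−t_n)} ( v''(t) + 2a v'(t) + a² v(t) ) |, one has |R^n| ≤ (Cγ/Γ(1−γ)) Σ_{j=0}^{n−2} τ_j² ∫_{t_j}^{t_{j+1}} (t_n−s)^{−γ−1} ds + (2C/Γ(3−γ)) τ_{n−1}^{2−γ}. In particular, on a uniform mesh with step τ one has |R^n| ≤ (1/Γ(1−γ) + 2/Γ(3−γ)) C τ^{2−γ}. -/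

import Mathlib

open Real MeasureTheory intervalIntegral Finset


lemma integK (γ T p q : ℝ) (hγ : γ < 1) :
    IntervalIntegrable (fun s => (T - s) ^ (-γ)) volume p q := by
  have h := (intervalIntegrable_rpow' (a := T - p) (b := T - q) (r := -γ)
    (by linarith)).comp_sub_left T
  simpa using h

lemma contK (γ T P Q : ℝ) (hQT : Q < T) :
    ContinuousOn (fun s => (T - s) ^ (-γ)) (Set.Icc P Q) := by
  apply ContinuousOn.rpow_const (continuousOn_const.sub continuousOn_id)
  intro x hx
  refine Or.inl ?_
  have : x ≤ Q := hx.2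
  simp only [Pi.sub_apply, id]
  intro h
  nlinarith [sub_eq_zero.mp h]

lemma contK1 (γ T P Q : ℝ) (hQT : Q < T) :
    ContinuousOn (fun s => (T - s) ^ (-γ - 1)) (Set.Icc P Q) := by
  apply ContinuousOn.rpow_const (continuousOn_const.sub continuousOn_id)
  intro x hx
  refine Or.inl ?_
  have : x ≤ Q := hx.2
  simp only [Pi.sub_apply, id]
  intro h
  nlinarith [sub_eq_zero.mp h]

lemma interior_bound (γ T M : ℝ) (hγ0 : 0 < γ) (hγ1 : γ < 1)
    (w w' w'' : ℝ → ℝ) (p q : ℝ) (hpq : p < q) (hqT : q < T)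
    (hw' : ∀ s ∈ Set.Icc p q, HasDerivAt w (w' s) s)
    (hw'' : ∀ s ∈ Set.Icc p q, HasDerivAt w' (w'' s) s)
    (hM : ∀ s ∈ Set.Icc p q, |w'' s| ≤ M) :
    |(∫ s in p..q, (T - s) ^ (-γ) * w' s)
        - (w q - w p) / (q - p) * ∫ s in p..q, (T - s) ^ (-γ)|
      ≤ M * (q - p) ^ 2 * (γ * ∫ s in p..q, (T - s) ^ (-γ - 1)) := by
  have hple : p ≤ q := hpq.le
  have huIcc : Set.uIcc p q = Set.Icc p q := Set.uIcc_of_le hple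
  set m : ℝ := (w q - w p) / (q - p) with hm
  set E : ℝ → ℝ := fun s => w s - w p - m * (s - p) with hE
  have hqp : q - p ≠ 0 := sub_ne_zero.mpr hpq.ne'
  have hEp : E p = 0 := by simp [hE]
  have hEq : E q = 0 := by
    simp only [hE, hm]
    field_simp
    ring
  have hE' : ∀ s ∈ Set.Icc p q, HasDerivAt E (w' s - m) s := by
    intro s hs
    have h1 : HasDerivAt (fun s => m * (s - p)) (m * 1) s :=
      (((hasDerivAt_id s).sub_const p)).const_mul m
    have h2 := ((hw' s hs).sub_const (w p)).sub h1
    simp only [mul_one] at h2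
    exact h2
  -- MVT to represent m as w' ξ
  have hwc : ContinuousOn w (Set.Icc p q) := fun s hs => (hw' s hs).continuousAt.continuousWithinAt
  obtain ⟨ξ, hξ, hξm⟩ := exists_hasDerivAt_eq_slope w w' hpq hwc
    (fun x hx => hw' x ⟨hx.1.le, hx.2.le⟩)
  -- Lipschitz bound on w'
  have hM0 : 0 ≤ M := le_trans (abs_nonneg _) (hM p ⟨le_refl p, hple⟩)
  have hLip : ∀ s ∈ Set.Icc p q, |w' s - m| ≤ M * (q - p) := by
    intro s hs
    have := Convex.norm_image_sub_le_of_norm_hasDerivWithin_le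
      (f := w') (f' := w'') (s := Set.Icc p q) (C := M)
      (fun x hx => (hw'' x hx).hasDerivWithinAt)
      (fun x hx => by simpa [Real.norm_eq_abs] using hM x hx)
      (convex_Icc p q) ⟨hξ.1.le, hξ.2.le⟩ hs
    rw [Real.norm_eq_abs, Real.norm_eq_abs] at this
    calc |w' s - m| = |w' s - w' ξ| := by rw [hξm]
      _ ≤ M * |s - ξ| := this
      _ ≤ M * (q - p) := by
          apply mul_le_mul_of_nonneg_left _ hM0
          rw [abs_le]
          constructor <;> [nlinarith [hs.1, hξ.2.le]; nlinarith [hs.2, hξ.1.le]]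
  -- bound on E
  have hEbound : ∀ s ∈ Set.Icc p q, |E s| ≤ M * (q - p) ^ 2 := by
    intro s hs
    have := Convex.norm_image_sub_le_of_norm_hasDerivWithin_le
      (f := E) (f' := fun s => w' s - m) (s := Set.Icc p q) (C := M * (q - p))
      (fun x hx => (hE' x hx).hasDerivWithinAt)
      (fun x hx => by simpa [Real.norm_eq_abs] using hLip x hx)
      (convex_Icc p q) ⟨le_refl p, hple⟩ hs
    rw [Real.norm_eq_abs, Real.norm_eq_abs, hEp, sub_zero] at this
    calc |E s| ≤ M * (q - p) * |s - p| := this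
      _ ≤ M * (q - p) * (q - p) := by
          apply mul_le_mul_of_nonneg_left _ (mul_nonneg hM0 (by linarith))
          rw [abs_le]; constructor <;> nlinarith [hs.1, hs.2]
      _ = M * (q - p) ^ 2 := by ring
  -- continuity facts
  have hKc : ContinuousOn (fun s => (T - s) ^ (-γ)) (Set.Icc p q) := contK γ T p q hqT
  have hK1c : ContinuousOn (fun s => (T - s) ^ (-γ - 1)) (Set.Icc p q) := contK1 γ T p q hqT
  have hw'c : ContinuousOn w' (Set.Icc p q) := fun s hs => (hw'' s hs).continuousAt.continuousWithinAt
  have hEc : ContinuousOn E (Set.Icc p q) := fun s hs => (hE' s hs).continuousAt.continuousWithinAt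
  have hKi : IntervalIntegrable (fun s => (T - s) ^ (-γ)) volume p q :=
    (hKc.mono (by rw [huIcc])).intervalIntegrable
  have hKw'i : IntervalIntegrable (fun s => (T - s) ^ (-γ) * w' s) volume p q :=
    ((hKc.mul hw'c).mono (by rw [huIcc])).intervalIntegrable
  -- derivative of kernel
  have hKd : ∀ s ∈ Set.uIcc p q, HasDerivAt (fun s => (T - s) ^ (-γ))
      (γ * (T - s) ^ (-γ - 1)) s := by
    intro s hs
    rw [huIcc] at hs
    have hTs : T - s ≠ 0 := by have := hs.2; intro h; nlinarith [sub_eq_zero.mp h]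
    have h1 : HasDerivAt (fun x : ℝ => x ^ (-γ)) (-γ * (T - s) ^ (-γ - 1)) (T - s) :=
      Real.hasDerivAt_rpow_const (Or.inl hTs)
    have h2 : HasDerivAt (fun s : ℝ => T - s) (-1) s := by
      have h := (hasDerivAt_const s T).sub (hasDerivAt_id s)
      simp only [zero_sub] at h
      exact h
    have := h1.comp s h2
    refine this.congr_deriv ?_
    ring
  -- integration by parts
  have hibp : ∫ s in p..q, (T - s) ^ (-γ) * (w' s - m)
      = - ∫ s in p..q, (γ * (T - s) ^ (-γ - 1)) * E s := by
    have := intervalIntegral.integral_mul_deriv_eq_deriv_mul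
      (u := fun s => (T - s) ^ (-γ)) (u' := fun s => γ * (T - s) ^ (-γ - 1))
      (v := E) (v' := fun s => w' s - m)
      hKd (fun x hx => hE' x (huIcc ▸ hx))
      ((((hK1c.const_smul γ).mono (by rw [huIcc])).intervalIntegrable).congr ?_ )
      (((hw'c.sub continuousOn_const).mono (by rw [huIcc])).intervalIntegrable)
    · rw [this, hEp, hEq]
      ring
    · intro x _; rfl
  have hsplit : (∫ s in p..q, (T - s) ^ (-γ) * w' s) - m * ∫ s in p..q, (T - s) ^ (-γ)
      = ∫ s in p..q, (T - s) ^ (-γ) * (w' s - m) := by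
    rw [show (fun s => (T - s) ^ (-γ) * (w' s - m))
        = fun s => (T - s) ^ (-γ) * w' s - m * (T - s) ^ (-γ) by funext s; ring]
    rw [intervalIntegral.integral_sub hKw'i (hKi.const_mul m),
      intervalIntegral.integral_const_mul]
  rw [hsplit, hibp, abs_neg]
  -- final estimate
  have hK1i : IntervalIntegrable (fun s => (T - s) ^ (-γ - 1)) volume p q :=
    (hK1c.mono (by rw [huIcc])).intervalIntegrable
  have habs : |∫ s in p..q, (γ * (T - s) ^ (-γ - 1)) * E s|
      ≤ ∫ s in p..q, |(γ * (T - s) ^ (-γ - 1)) * E s| :=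
    intervalIntegral.abs_integral_le_integral_abs hple
  have hmono : ∫ s in p..q, |(γ * (T - s) ^ (-γ - 1)) * E s|
      ≤ ∫ s in p..q, (γ * (T - s) ^ (-γ - 1)) * (M * (q - p) ^ 2) := by
    apply intervalIntegral.integral_mono_on hple
    · exact (((hK1c.const_smul γ).mul hEc).mono (by rw [huIcc])).intervalIntegrable.abs
    · exact ((hK1i.const_mul γ)).mul_const _
    · intro x hx
      have hK1nn : 0 ≤ (T - x) ^ (-γ - 1) :=
        Real.rpow_nonneg (by nlinarith [hx.2]) _
      rw [abs_mul]
      have : |γ * (T - x) ^ (-γ - 1)| = γ * (T - x) ^ (-γ - 1) :=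
        abs_of_nonneg (by positivity)
      rw [this]
      exact mul_le_mul_of_nonneg_left (hEbound x hx) (by positivity)
  have hfin : ∫ s in p..q, (γ * (T - s) ^ (-γ - 1)) * (M * (q - p) ^ 2)
      = M * (q - p) ^ 2 * (γ * ∫ s in p..q, (T - s) ^ (-γ - 1)) := by
    rw [show (fun s => (γ * (T - s) ^ (-γ - 1)) * (M * (q - p) ^ 2))
        = fun s => (γ * (M * (q - p) ^ 2)) * (T - s) ^ (-γ - 1) by funext s; ring]
    rw [intervalIntegral.integral_const_mul]
    ring
  calc |∫ s in p..q, (γ * (T - s) ^ (-γ - 1)) * E s|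
      ≤ ∫ s in p..q, (γ * (T - s) ^ (-γ - 1)) * (M * (q - p) ^ 2) := le_trans habs hmono
    _ = M * (q - p) ^ 2 * (γ * ∫ s in p..q, (T - s) ^ (-γ - 1)) := hfin

lemma intK_val (γ T p : ℝ) (hγ0 : 0 < γ) (hγ1 : γ < 1) (hpT : p ≤ T) :
    ∫ s in p..T, (T - s) ^ (-γ) = (T - p) ^ (1 - γ) / (1 - γ) := by
  have h := intervalIntegral.integral_comp_sub_left (a := p) (b := T)
    (fun x : ℝ => x ^ (-γ)) T
  rw [h, sub_self]
  rw [integral_rpow (Or.inl (by linarith))]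
  rw [Real.zero_rpow (by intro h; nlinarith)]
  ring_nf

lemma last_bound (γ T M : ℝ) (hγ0 : 0 < γ) (hγ1 : γ < 1)
    (w w' w'' : ℝ → ℝ) (p : ℝ) (hpT : p < T)
    (hw' : ∀ s ∈ Set.Icc p T, HasDerivAt w (w' s) s)
    (hw'' : ∀ s ∈ Set.Icc p T, HasDerivAt w' (w'' s) s)
    (hM : ∀ s ∈ Set.Icc p T, |w'' s| ≤ M) :
    |(∫ s in p..T, (T - s) ^ (-γ) * w' s)
        - (w T - w p) / (T - p) * ∫ s in p..T, (T - s) ^ (-γ)|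
      ≤ M * (T - p) * ((T - p) ^ (1 - γ) / (1 - γ)) := by
  have hple : p ≤ T := hpT.le
  have huIcc : Set.uIcc p T = Set.Icc p T := Set.uIcc_of_le hple
  set m : ℝ := (w T - w p) / (T - p) with hm
  have hwc : ContinuousOn w (Set.Icc p T) := fun s hs => (hw' s hs).continuousAt.continuousWithinAt
  obtain ⟨ξ, hξ, hξm⟩ := exists_hasDerivAt_eq_slope w w' hpT hwc
    (fun x hx => hw' x ⟨hx.1.le, hx.2.le⟩)
  have hM0 : 0 ≤ M := le_trans (abs_nonneg _) (hM p ⟨le_refl p, hple⟩)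
  have hLip : ∀ s ∈ Set.Icc p T, |w' s - m| ≤ M * (T - p) := by
    intro s hs
    have := Convex.norm_image_sub_le_of_norm_hasDerivWithin_le
      (f := w') (f' := w'') (s := Set.Icc p T) (C := M)
      (fun x hx => (hw'' x hx).hasDerivWithinAt)
      (fun x hx => by simpa [Real.norm_eq_abs] using hM x hx)
      (convex_Icc p T) ⟨hξ.1.le, hξ.2.le⟩ hs
    rw [Real.norm_eq_abs, Real.norm_eq_abs] at this
    calc |w' s - m| = |w' s - w' ξ| := by rw [hξm]
      _ ≤ M * |s - ξ| := this
      _ ≤ M * (T - p) := by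
          apply mul_le_mul_of_nonneg_left _ hM0
          rw [abs_le]
          constructor <;> [nlinarith [hs.1, hξ.2.le]; nlinarith [hs.2, hξ.1.le]]
  have hw'c : ContinuousOn w' (Set.Icc p T) := fun s hs => (hw'' s hs).continuousAt.continuousWithinAt
  have hKi : IntervalIntegrable (fun s => (T - s) ^ (-γ)) volume p T := integK γ T p T hγ1
  have hKw'i : IntervalIntegrable (fun s => (T - s) ^ (-γ) * w' s) volume p T :=
    hKi.mul_continuousOn (hw'c.mono (by rw [huIcc]))
  have hsplit : (∫ s in p..T, (T - s) ^ (-γ) * w' s) - m * ∫ s in p..T, (T - s) ^ (-γ)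
      = ∫ s in p..T, (T - s) ^ (-γ) * (w' s - m) := by
    rw [show (fun s => (T - s) ^ (-γ) * (w' s - m))
        = fun s => (T - s) ^ (-γ) * w' s - m * (T - s) ^ (-γ) by funext s; ring]
    rw [intervalIntegral.integral_sub hKw'i (hKi.const_mul m),
      intervalIntegral.integral_const_mul]
  rw [hsplit]
  have habs : |∫ s in p..T, (T - s) ^ (-γ) * (w' s - m)|
      ≤ ∫ s in p..T, |(T - s) ^ (-γ) * (w' s - m)| :=
    intervalIntegral.abs_integral_le_integral_abs hple
  have hinti : IntervalIntegrable (fun s => (T - s) ^ (-γ) * (w' s - m)) volume p T :=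
    hKi.mul_continuousOn ((hw'c.sub continuousOn_const).mono (by rw [huIcc]))
  have hmono : ∫ s in p..T, |(T - s) ^ (-γ) * (w' s - m)|
      ≤ ∫ s in p..T, (T - s) ^ (-γ) * (M * (T - p)) := by
    apply intervalIntegral.integral_mono_on hple hinti.abs (hKi.mul_const _)
    intro x hx
    have hKnn : 0 ≤ (T - x) ^ (-γ) := Real.rpow_nonneg (by linarith [hx.2]) _
    rw [abs_mul, abs_of_nonneg hKnn]
    exact mul_le_mul_of_nonneg_left (hLip x hx) hKnn
  have hfin : ∫ s in p..T, (T - s) ^ (-γ) * (M * (T - p))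
      = M * (T - p) * ((T - p) ^ (1 - γ) / (1 - γ)) := by
    rw [intervalIntegral.integral_mul_const, intK_val γ T p hγ0 hγ1 hple]
    ring
  calc |∫ s in p..T, (T - s) ^ (-γ) * (w' s - m)|
      ≤ ∫ s in p..T, (T - s) ^ (-γ) * (M * (T - p)) := le_trans habs hmono
    _ = M * (T - p) * ((T - p) ^ (1 - γ) / (1 - γ)) := hfin

set_option maxHeartbeats 3200000 in
theorem pi_remainder_bound
    (γ a : ℝ) (hγ0 : 0 < γ) (hγ1 : γ < 1) (ha : 0 ≤ a)
    (n : ℕ) (hn : 1 ≤ n)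
    (t : ℕ → ℝ) (ht0 : t 0 = 0) (hmono : ∀ j < n, t j < t (j + 1))
    (v v' v'' : ℝ → ℝ)
    (hv' : ∀ s ∈ Set.Icc 0 (t n), HasDerivAt v (v' s) s)
    (hv'' : ∀ s ∈ Set.Icc 0 (t n), HasDerivAt v' (v'' s) s)
    (hv''c : ContinuousOn v'' (Set.Icc 0 (t n)))
    (C : ℝ)
    (hC : ∀ s ∈ Set.Icc 0 (t n),
      |Real.exp (a * (s - t n)) * (v'' s + 2 * a * v' s + a ^ 2 * v s)| ≤ C)
    (R : ℝ)
    (hR : R =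
      Real.exp (-(a * t n)) / Real.Gamma (1 - γ) *
          (∫ s in (0:ℝ)..(t n), (t n - s) ^ (-γ) * (Real.exp (a * s) * (v' s + a * v s)))
        - Real.exp (-(a * t n)) / Real.Gamma (1 - γ) *
            ∑ j ∈ Finset.range n,
              ((Real.exp (a * t (j + 1)) * v (t (j + 1)) - Real.exp (a * t j) * v (t j))
                  / (t (j + 1) - t j)) *
                ∫ s in (t j)..(t (j + 1)), (t n - s) ^ (-γ)) :
    |R| ≤ C * γ / Real.Gamma (1 - γ) *
            (∑ j ∈ Finset.range (n - 1),
              (t (j + 1) - t j) ^ 2 * ∫ s in (t j)..(t (j + 1)), (t n - s) ^ (-γ - 1))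
          + 2 * C / Real.Gamma (3 - γ) * (t n - t (n - 1)) ^ (2 - γ)
      ∧ ∀ τ : ℝ, (∀ j < n, t (j + 1) - t j = τ) →
          |R| ≤ (1 / Real.Gamma (1 - γ) + 2 / Real.Gamma (3 - γ)) * C * τ ^ (2 - γ) := by
  obtain ⟨m, rfl⟩ : ∃ m, n = m + 1 := ⟨n - 1, (Nat.succ_pred_eq_of_pos hn).symm⟩
  simp only [Nat.add_sub_cancel]
  set T : ℝ := t (m + 1) with hT
  -- mesh monotonicity
  have ht_le : ∀ k ≤ m + 1, ∀ j ≤ k, t j ≤ t k := by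
    intro k
    induction k with
    | zero => intro _ j hj; interval_cases j; rfl
    | succ k ih =>
      intro hk j hj
      rcases Nat.lt_or_ge j (k + 1) with h | h
      · exact le_trans (ih (le_trans (Nat.le_succ k) hk) j (Nat.lt_succ_iff.mp h))
          (le_of_lt (hmono k (Nat.lt_of_succ_le hk)))
      · have : j = k + 1 := le_antisymm hj h
        simp [this]
  have htm_lt : t m < T := hmono m (Nat.lt_succ_self m)
  have ht0m : (0:ℝ) ≤ t m := ht0 ▸ ht_le m (Nat.le_succ m) 0 (Nat.zero_le m)
  have hT0 : 0 < T := lt_of_le_of_lt ht0m htm_lt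
  have htj0 : ∀ j ≤ m + 1, 0 ≤ t j := fun j hj => ht0 ▸ ht_le j hj 0 (Nat.zero_le j)
  have htjT : ∀ j ≤ m + 1, t j ≤ T := fun j hj => ht_le (m + 1) le_rfl j hj
  -- Gamma facts
  have hΓ1 : 0 < Real.Gamma (1 - γ) := Real.Gamma_pos_of_pos (by linarith)
  have hΓ2eq : Real.Gamma (2 - γ) = (1 - γ) * Real.Gamma (1 - γ) := by
    rw [show (2 - γ) = (1 - γ) + 1 by ring, Real.Gamma_add_one (by intro h; nlinarith)]
  have hΓ2 : 0 < Real.Gamma (2 - γ) := Real.Gamma_pos_of_pos (by linarith)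
  have hΓ3eq : Real.Gamma (3 - γ) = (2 - γ) * Real.Gamma (2 - γ) := by
    rw [show (3 - γ) = (2 - γ) + 1 by ring, Real.Gamma_add_one (by intro h; nlinarith)]
  have hΓ3 : 0 < Real.Gamma (3 - γ) := Real.Gamma_pos_of_pos (by linarith)
  -- setup w and derivatives
  set w : ℝ → ℝ := fun s => Real.exp (a * s) * v s with hw
  set W' : ℝ → ℝ := fun s => Real.exp (a * s) * (v' s + a * v s) with hWd
  set W'' : ℝ → ℝ := fun s => Real.exp (a * s) * (v'' s + 2 * a * v' s + a ^ 2 * v s) with hWdd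
  have hexp : ∀ s : ℝ, HasDerivAt (fun s => Real.exp (a * s)) (Real.exp (a * s) * (a * 1)) s :=
    fun s => ((hasDerivAt_id s).const_mul a).exp
  have hW' : ∀ s ∈ Set.Icc 0 T, HasDerivAt w (W' s) s := by
    intro s hs
    have := (hexp s).mul (hv' s hs)
    refine this.congr_deriv ?_
    simp only [hWd]; ring
  have hW'' : ∀ s ∈ Set.Icc 0 T, HasDerivAt W' (W'' s) s := by
    intro s hs
    have := (hexp s).mul ((hv'' s hs).add ((hv' s hs).const_mul a))
    refine this.congr_deriv ?_
    simp only [hWdd, Pi.add_apply]; ring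
  set Mb : ℝ := C * Real.exp (a * T) with hMbdef
  have hMb : ∀ s ∈ Set.Icc 0 T, |W'' s| ≤ Mb := by
    intro s hs
    have key : W'' s = Real.exp (a * T) *
        (Real.exp (a * (s - T)) * (v'' s + 2 * a * v' s + a ^ 2 * v s)) := by
      simp only [hWdd]
      rw [← mul_assoc, ← Real.exp_add]
      ring_nf
    rw [key, abs_mul, abs_of_pos (Real.exp_pos _)]
    calc Real.exp (a * T) * |Real.exp (a * (s - T)) * (v'' s + 2 * a * v' s + a ^ 2 * v s)|
        ≤ Real.exp (a * T) * C :=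
          mul_le_mul_of_nonneg_left (hC s hs) (Real.exp_pos _).le
      _ = Mb := by rw [hMbdef]; ring
  have hC0 : 0 ≤ C := le_trans (abs_nonneg _) (hC 0 ⟨le_refl 0, hT0.le⟩)
  -- continuity of W'
  have hW'c : ContinuousOn W' (Set.Icc 0 T) :=
    fun s hs => (hW'' s hs).continuousAt.continuousWithinAt
  have hsub : ∀ j ≤ m, Set.Icc (t j) (t (j + 1)) ⊆ Set.Icc 0 T := by
    intro j hj x hx
    exact ⟨le_trans (htj0 j (le_trans hj (Nat.le_succ m))) hx.1,
      le_trans hx.2 (htjT (j + 1) (Nat.succ_le_succ hj))⟩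
  have huIccj : ∀ j ≤ m, Set.uIcc (t j) (t (j + 1)) = Set.Icc (t j) (t (j + 1)) :=
    fun j hj => Set.uIcc_of_le (hmono j (Nat.lt_succ_of_le hj)).le
  -- integrability on each subinterval
  have hKW'i : ∀ j < m + 1, IntervalIntegrable
      (fun s => (T - s) ^ (-γ) * W' s) volume (t j) (t (j + 1)) := by
    intro j hj
    have hj' : j ≤ m := Nat.lt_succ_iff.mp hj
    exact (integK γ T _ _ hγ1).mul_continuousOn
      ((hW'c.mono (hsub j hj')).mono (by rw [huIccj j hj']))
  -- split the integral
  have hsum : (∫ s in (0:ℝ)..T, (T - s) ^ (-γ) * W' s)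
      = ∑ j ∈ Finset.range (m + 1), ∫ s in (t j)..(t (j + 1)), (T - s) ^ (-γ) * W' s := by
    rw [intervalIntegral.sum_integral_adjacent_intervals hKW'i, ht0]
  -- rewrite R
  set c : ℝ := Real.exp (-(a * T)) / Real.Gamma (1 - γ) with hc
  have hc0 : 0 < c := div_pos (Real.exp_pos _) hΓ1
  set D : ℕ → ℝ := fun j => (∫ s in (t j)..(t (j + 1)), (T - s) ^ (-γ) * W' s)
      - (w (t (j + 1)) - w (t j)) / (t (j + 1) - t j) * ∫ s in (t j)..(t (j + 1)), (T - s) ^ (-γ)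
    with hD
  have hRD : R = c * ∑ j ∈ Finset.range (m + 1), D j := by
    rw [hR, hsum, ← mul_sub, ← Finset.sum_sub_distrib]
  have hRabs : |R| ≤ c * ∑ j ∈ Finset.range (m + 1), |D j| := by
    rw [hRD, abs_mul, abs_of_pos hc0]
    exact mul_le_mul_of_nonneg_left (Finset.abs_sum_le_sum_abs _ _) hc0.le
  -- interior bounds
  have hint : ∀ j ∈ Finset.range m, |D j| ≤ Mb * (t (j + 1) - t j) ^ 2 *
      (γ * ∫ s in (t j)..(t (j + 1)), (T - s) ^ (-γ - 1)) := by
    intro j hj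
    have hjm : j < m := Finset.mem_range.mp hj
    have hjle : j ≤ m := hjm.le
    have hq_lt : t (j + 1) < T :=
      lt_of_le_of_lt (ht_le m (Nat.le_succ m) (j + 1) hjm) htm_lt
    exact interior_bound γ T Mb hγ0 hγ1 w W' W'' (t j) (t (j + 1))
      (hmono j (Nat.lt_succ_of_le hjle)) hq_lt
      (fun s hs => hW' s (hsub j hjle hs))
      (fun s hs => hW'' s (hsub j hjle hs))
      (fun s hs => hMb s (hsub j hjle hs))
  -- last interval bound
  have hlast : |D m| ≤ Mb * (T - t m) * ((T - t m) ^ (1 - γ) / (1 - γ)) := by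
    have hsubm : Set.Icc (t m) T ⊆ Set.Icc 0 T :=
      fun x hx => ⟨le_trans ht0m hx.1, hx.2⟩
    exact last_bound γ T Mb hγ0 hγ1 w W' W'' (t m) htm_lt
      (fun s hs => hW' s (hsubm hs))
      (fun s hs => hW'' s (hsubm hs))
      (fun s hs => hMb s (hsubm hs))
  -- combine
  have hMb0 : 0 ≤ Mb := by positivity
  have hcMb : c * Mb = C / Real.Gamma (1 - γ) := by
    rw [hc, hMbdef, Real.exp_neg]
    field_simp
  set S1 : ℝ := ∑ j ∈ Finset.range m,
    (t (j + 1) - t j) ^ 2 * ∫ s in (t j)..(t (j + 1)), (T - s) ^ (-γ - 1) with hS1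
  set τl : ℝ := T - t m with hτl
  have hτl0 : 0 < τl := by rw [hτl]; linarith
  have hτpow : τl * τl ^ (1 - γ) = τl ^ (2 - γ) := by
    rw [show (2 - γ) = 1 + (1 - γ) by ring, Real.rpow_add hτl0, Real.rpow_one]
  have hmain : |R| ≤ C * γ / Real.Gamma (1 - γ) * S1
      + 2 * C / Real.Gamma (3 - γ) * τl ^ (2 - γ) := by
    have h1 : ∑ j ∈ Finset.range (m + 1), |D j|
        ≤ (∑ j ∈ Finset.range m, Mb * (t (j + 1) - t j) ^ 2 *
            (γ * ∫ s in (t j)..(t (j + 1)), (T - s) ^ (-γ - 1)))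
          + Mb * τl * (τl ^ (1 - γ) / (1 - γ)) := by
      rw [Finset.sum_range_succ]
      exact add_le_add (Finset.sum_le_sum hint) hlast
    have h2 : c * ((∑ j ∈ Finset.range m, Mb * (t (j + 1) - t j) ^ 2 *
            (γ * ∫ s in (t j)..(t (j + 1)), (T - s) ^ (-γ - 1)))
          + Mb * τl * (τl ^ (1 - γ) / (1 - γ)))
        = C * γ / Real.Gamma (1 - γ) * S1
          + (C / Real.Gamma (1 - γ)) * (τl ^ (2 - γ) / (1 - γ)) := by
      rw [mul_add]
      congr 1
      · rw [hS1, Finset.mul_sum, Finset.mul_sum]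
        apply Finset.sum_congr rfl
        intro j _
        have : c * (Mb * (t (j + 1) - t j) ^ 2 *
            (γ * ∫ s in (t j)..(t (j + 1)), (T - s) ^ (-γ - 1)))
          = (c * Mb) * γ * ((t (j + 1) - t j) ^ 2 *
            ∫ s in (t j)..(t (j + 1)), (T - s) ^ (-γ - 1)) := by ring
        rw [this, hcMb]
        ring
      · rw [show c * (Mb * τl * (τl ^ (1 - γ) / (1 - γ)))
            = (c * Mb) * ((τl * τl ^ (1 - γ)) / (1 - γ)) by ring, hcMb, hτpow]
    have h3 : (C / Real.Gamma (1 - γ)) * (τl ^ (2 - γ) / (1 - γ))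
        ≤ 2 * C / Real.Gamma (3 - γ) * τl ^ (2 - γ) := by
      have heq : (C / Real.Gamma (1 - γ)) * (τl ^ (2 - γ) / (1 - γ))
          = (1 / Real.Gamma (2 - γ)) * (C * τl ^ (2 - γ)) := by
        rw [hΓ2eq]
        field_simp
      have heq2 : 2 * C / Real.Gamma (3 - γ) * τl ^ (2 - γ)
          = (2 / Real.Gamma (3 - γ)) * (C * τl ^ (2 - γ)) := by ring
      rw [heq, heq2]
      apply mul_le_mul_of_nonneg_right _ (by positivity)
      rw [div_le_div_iff₀ hΓ2 hΓ3, hΓ3eq]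
      nlinarith [hΓ2]
    calc |R| ≤ c * ∑ j ∈ Finset.range (m + 1), |D j| := hRabs
      _ ≤ c * ((∑ j ∈ Finset.range m, Mb * (t (j + 1) - t j) ^ 2 *
            (γ * ∫ s in (t j)..(t (j + 1)), (T - s) ^ (-γ - 1)))
          + Mb * τl * (τl ^ (1 - γ) / (1 - γ))) :=
        mul_le_mul_of_nonneg_left h1 hc0.le
      _ = C * γ / Real.Gamma (1 - γ) * S1
          + (C / Real.Gamma (1 - γ)) * (τl ^ (2 - γ) / (1 - γ)) := h2
      _ ≤ C * γ / Real.Gamma (1 - γ) * S1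
          + 2 * C / Real.Gamma (3 - γ) * τl ^ (2 - γ) := by linarith [h3]
  refine ⟨hmain, ?_⟩
  -- uniform mesh
  intro τ hτu
  have hτm : τl = τ := by rw [hτl]; exact hτu m (Nat.lt_succ_self m)
  have hτ0 : 0 < τ := hτm ▸ hτl0
  -- compute the sum of K1 integrals
  have hK1i : ∀ j < m, IntervalIntegrable
      (fun s => (T - s) ^ (-γ - 1)) volume (t j) (t (j + 1)) := by
    intro j hj
    have hq_lt : t (j + 1) < T := lt_of_le_of_lt (ht_le m (Nat.le_succ m) (j + 1) hj) htm_lt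
    exact ((contK1 γ T (t j) (t (j + 1)) hq_lt).mono
      (by rw [huIccj j hj.le])).intervalIntegrable
  have hsum1 : ∑ j ∈ Finset.range m, ∫ s in (t j)..(t (j + 1)), (T - s) ^ (-γ - 1)
      = ∫ s in (0:ℝ)..(t m), (T - s) ^ (-γ - 1) := by
    rw [intervalIntegral.sum_integral_adjacent_intervals hK1i, ht0]
  have hval : ∫ s in (0:ℝ)..(t m), (T - s) ^ (-γ - 1)
      = (τ ^ (-γ) - T ^ (-γ)) / γ := by
    have h := intervalIntegral.integral_comp_sub_left (a := (0:ℝ)) (b := t m)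
      (fun x : ℝ => x ^ (-γ - 1)) T
    rw [h, sub_zero]
    have hTm : T - t m = τ := hτm ▸ hτl
    rw [hTm]
    have hir := integral_rpow (a := τ) (b := T) (r := -γ - 1)
      (Or.inr ⟨by intro h'; linarith, Set.notMem_uIcc_of_lt hτ0 hT0⟩)
    rw [hir]
    rw [show -γ - 1 + 1 = -γ by ring, div_neg, ← neg_div, neg_sub]
  have hS1b : S1 ≤ τ ^ 2 * (τ ^ (-γ) / γ) := by
    rw [hS1]
    have hcg : ∀ j ∈ Finset.range m, (t (j + 1) - t j) ^ 2 *
        (∫ s in (t j)..(t (j + 1)), (T - s) ^ (-γ - 1))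
        = τ ^ 2 * ∫ s in (t j)..(t (j + 1)), (T - s) ^ (-γ - 1) := by
      intro j hj
      rw [hτu j (Nat.lt_succ_of_le (Finset.mem_range.mp hj).le)]
    rw [Finset.sum_congr rfl hcg, ← Finset.mul_sum, hsum1, hval]
    have hTnn : 0 ≤ T ^ (-γ) := Real.rpow_nonneg hT0.le _
    apply mul_le_mul_of_nonneg_left _ (by positivity)
    exact (div_le_div_iff_of_pos_right hγ0).mpr (by linarith)
  have hpow2 : τ ^ 2 * τ ^ (-γ) = τ ^ (2 - γ) := by
    have h2 : τ ^ ((2:ℕ):ℝ) = τ ^ (2:ℕ) := Real.rpow_natCast τ 2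
    calc τ ^ 2 * τ ^ (-γ) = τ ^ ((2:ℕ):ℝ) * τ ^ (-γ) := by rw [h2]
      _ = τ ^ (((2:ℕ):ℝ) + (-γ)) := (Real.rpow_add hτ0 _ _).symm
      _ = τ ^ (2 - γ) := by congr 1
  have hA : C * γ / Real.Gamma (1 - γ) * S1
      ≤ (1 / Real.Gamma (1 - γ)) * (C * τ ^ (2 - γ)) := by
    calc C * γ / Real.Gamma (1 - γ) * S1
        ≤ C * γ / Real.Gamma (1 - γ) * (τ ^ 2 * (τ ^ (-γ) / γ)) :=
          mul_le_mul_of_nonneg_left hS1b (by positivity)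
      _ = (1 / Real.Gamma (1 - γ)) * (C * (τ ^ 2 * τ ^ (-γ))) := by
          field_simp
      _ = (1 / Real.Gamma (1 - γ)) * (C * τ ^ (2 - γ)) := by rw [hpow2]
  calc |R| ≤ C * γ / Real.Gamma (1 - γ) * S1
        + 2 * C / Real.Gamma (3 - γ) * τl ^ (2 - γ) := hmain
    _ = C * γ / Real.Gamma (1 - γ) * S1
        + 2 * C / Real.Gamma (3 - γ) * τ ^ (2 - γ) := by rw [hτm]
    _ ≤ (1 / Real.Gamma (1 - γ)) * (C * τ ^ (2 - γ))
        + 2 * C / Real.Gamma (3 - γ) * τ ^ (2 - γ) := by linarith [hA]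
    _ = (1 / Real.Gamma (1 - γ) + 2 / Real.Gamma (3 - γ)) * C * τ ^ (2 - γ) := by ring
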